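/- Setting Q = exp(i φ) with φ = -(u₂+u₁)/2 and k = pq/4, the discrete sine-Gordon equation sin((u₁₂ - u₁ - u₂ + u)/4) = (pq/4) sin((u₁₂ + u₁ + u₂ + u)/4) implies the rational relation Q₁₂·Q = ((Q₂ - k₂)/(1 - k₂Q₂))·((Q₁ - k₁)/(1 - k₁Q₁)), provided the denominators are nonzero. -/

import Mathlib

open Matrix Complex

noncomputable section

/-- `Q(n,m) = exp(i φ⁽¹⁾) = exp(-i(u(n,m+1)+u(n+1,m))/2)`. -/
def Qfun (u : ℤ → ℤ → ℝ) (n m : ℤ) : ℂ :=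
  Complex.exp (-Complex.I * ((u n (m+1) + u (n+1) m)/2))

/-- `k(n,m) = p(n) q(m) / 4`. -/
def kfun (p q : ℤ → ℝ) (n m : ℤ) : ℂ := ((p n * q m / 4 : ℝ) : ℂ)

lemma key_step (u : ℤ → ℤ → ℝ) (p q : ℤ → ℝ) (n m : ℤ)
    (hsg : Real.sin ((u (n+1) (m+1) - u (n+1) m - u n (m+1) + u n m)/4) =
        (p n * q m / 4) *
          Real.sin ((u (n+1) (m+1) + u (n+1) m + u n (m+1) + u n m)/4))
    (h : 1 - kfun p q n m * Qfun u n m ≠ 0) :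
    (Qfun u n m - kfun p q n m) / (1 - kfun p q n m * Qfun u n m) =
      Complex.exp (-Complex.I * ((u (n+1) (m+1) + u n m)/2)) := by
  set S : ℂ := (((u (n+1) (m+1) - u (n+1) m - u n (m+1) + u n m)/4 : ℝ) : ℂ) with hSdef
  set T : ℂ := (((u (n+1) (m+1) + u (n+1) m + u n (m+1) + u n m)/4 : ℝ) : ℂ) with hTdef
  set x : ℂ := Complex.exp (Complex.I * S) with hxdef
  set y : ℂ := Complex.exp (Complex.I * T) with hydef
  have hx : x ≠ 0 := Complex.exp_ne_zero _
  have hy : y ≠ 0 := Complex.exp_ne_zero _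
  set k : ℂ := kfun p q n m with hkdef
  -- the sine-Gordon relation in exponential form
  have hsin : Complex.sin S = k * Complex.sin T := by
    rw [hSdef, hTdef, hkdef, kfun, ← Complex.ofReal_sin, ← Complex.ofReal_sin]
    rw [hsg]; push_cast; ring
  have hrel : x * x * y - y = k * (x * y * y - x) := by
    have h1 : Complex.sin S = (Complex.exp (-S * Complex.I) - Complex.exp (S * Complex.I)) * Complex.I / 2 := rfl
    have h2 : Complex.sin T = (Complex.exp (-T * Complex.I) - Complex.exp (T * Complex.I)) * Complex.I / 2 := rfl
    have hxinv : Complex.exp (-S * Complex.I) = x⁻¹ := by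
      rw [hxdef, ← Complex.exp_neg]; ring_nf
    have hyinv : Complex.exp (-T * Complex.I) = y⁻¹ := by
      rw [hydef, ← Complex.exp_neg]; ring_nf
    have hxx : Complex.exp (S * Complex.I) = x := by rw [hxdef]; ring_nf
    have hyy : Complex.exp (T * Complex.I) = y := by rw [hydef]; ring_nf
    rw [h1, h2, hxinv, hyinv, hxx, hyy] at hsin
    have hI : (Complex.I : ℂ) ≠ 0 := Complex.I_ne_zero
    field_simp at hsin
    linear_combination (-1 : ℂ) * hsin
  -- express Q and the target exponential in terms of x, y
  have hQ : Qfun u n m = x * y⁻¹ := by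
    rw [hxdef, hydef, ← Complex.exp_neg, ← Complex.exp_add, Qfun]
    congr 1
    rw [hSdef, hTdef]
    push_cast
    ring
  have hE : Complex.exp (-Complex.I * (((u (n+1) (m+1) : ℝ) + (u n m : ℝ))/2)) = (x * y)⁻¹ := by
    rw [hxdef, hydef, ← Complex.exp_add, ← Complex.exp_neg]
    congr 1
    rw [hSdef, hTdef]
    push_cast
    ring
  rw [hQ] at h
  rw [hQ, hE, div_eq_iff h]
  field_simp
  -- h : y * y - k * (x * y) ≠ 0 (some form); goal polynomial identity from hrel
  linear_combination hrel

/-- The discrete sine-Gordon equation implies the rational relation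
`Q₁₂ Q = ((Q₂-k₂)/(1-k₂Q₂))((Q₁-k₁)/(1-k₁Q₁))`, provided the denominators
are nonzero. -/
theorem hirota_to_Q_equation (u : ℤ → ℤ → ℝ) (p q : ℤ → ℝ)
    (hsg : ∀ n m : ℤ,
      Real.sin ((u (n+1) (m+1) - u (n+1) m - u n (m+1) + u n m)/4) =
        (p n * q m / 4) *
          Real.sin ((u (n+1) (m+1) + u (n+1) m + u n (m+1) + u n m)/4)) :
    ∀ n m : ℤ,
      1 - kfun p q n (m+1) * Qfun u n (m+1) ≠ 0 →
      1 - kfun p q (n+1) m * Qfun u (n+1) m ≠ 0 →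
      Qfun u (n+1) (m+1) * Qfun u n m =
        ((Qfun u n (m+1) - kfun p q n (m+1)) / (1 - kfun p q n (m+1) * Qfun u n (m+1))) *
        ((Qfun u (n+1) m - kfun p q (n+1) m) / (1 - kfun p q (n+1) m * Qfun u (n+1) m)) := by
  intro n m h2 h1
  rw [key_step u p q n (m+1) (hsg n (m+1)) h2, key_step u p q (n+1) m (hsg (n+1) m) h1]
  rw [Qfun, Qfun, ← Complex.exp_add, ← Complex.exp_add]
  congr 1
  ring

end
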